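/- There exist 2^ℵ₀ (continuum many) complete folding sequences that are pairwise not locally isomorphic, i.e., an injection from the Cantor set (or from {0,1}^ℕ) into the set of local-isomorphism classes of complete folding sequences. -/

import Mathlib

/-- Reversal-with-negation of a finite ±1 word. -/
def negRev (S : List ℤ) : List ℤ := (S.map (fun x => -x)).reverse

/-- `IsFold n S` : `S` is an `n`-folding sequence. -/
inductive IsFold : ℕ → List ℤ → Prop
  | zero : IsFold 0 []
  | succ (n : ℕ) (S : List ℤ) (ε : ℤ) : IsFold n S → (ε = 1 ∨ ε = -1) →
      IsFold (n + 1) (negRev S ++ ε :: S)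

/-- The subword `(a (h+1), …, a (h+t))` of a bi-infinite sequence. -/
def subwordAt (a : ℤ → ℤ) (h : ℤ) (t : ℕ) : List ℤ :=
  (List.range t).map fun i => a (h + 1 + (i : ℤ))

/-- `T` is a finite subword of the bi-infinite sequence `a`. -/
def IsSubword (a : ℤ → ℤ) (T : List ℤ) : Prop := ∃ h : ℤ, T = subwordAt a h T.length

/-- A finite folding sequence: a subword of some `n`-folding sequence. -/
def IsFiniteFold (T : List ℤ) : Prop := ∃ n S, IsFold n S ∧ T <:+: S

/-- The sequence takes values in `{+1, -1}`. -/
def PM (a : ℤ → ℤ) : Prop := ∀ h : ℤ, a h = 1 ∨ a h = -1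

/-- `a (hn + k·2^(n+1)) = (-1)^k · a hn` for all `k`. -/
def AltProp (a : ℤ → ℤ) (n : ℕ) (hn : ℤ) : Prop :=
  ∀ k : ℤ, a (hn + k * 2 ^ (n + 1)) = if Even k then a hn else -a hn

/-- A complete folding sequence (alternation characterization). -/
def CompleteFold (a : ℤ → ℤ) : Prop := PM a ∧ ∀ n : ℕ, ∃ hn : ℤ, AltProp a n hn

/-- Rotate a direction left (`η = 1`) or right (otherwise). -/
def rot (d : ℤ × ℤ) (η : ℤ) : ℤ × ℤ := if η = 1 then (-d.2, d.1) else (d.2, -d.1)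

/-- Unit lattice direction. -/
def IsUnitVec (d : ℤ × ℤ) : Prop := d = (1, 0) ∨ d = (0, 1) ∨ d = (-1, 0) ∨ d = (0, -1)

/-- Direction of the `i`-th step of the curve with turn word `η`. -/
def dirAt (d0 : ℤ × ℤ) (η : List ℤ) (i : ℕ) : ℤ × ℤ := (η.take i).foldl rot d0

/-- `i`-th vertex of the curve started at `X0` with initial direction `d0`. -/
def vertexAt (X0 d0 : ℤ × ℤ) (η : List ℤ) (i : ℕ) : ℤ × ℤ :=
  X0 + ∑ j ∈ Finset.range i, dirAt d0 η j

/-- `i`-th (unordered) unit edge of the curve. -/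
def edgeAt (X0 d0 : ℤ × ℤ) (η : List ℤ) (i : ℕ) : Sym2 (ℤ × ℤ) :=
  s(vertexAt X0 d0 η i, vertexAt X0 d0 η (i + 1))

/-- A complete folding curve, given by its vertex function. -/
def IsCFCurve (V : ℤ → ℤ × ℤ) : Prop :=
  (∀ i : ℤ, IsUnitVec (V (i + 1) - V i)) ∧
  ∃ η : ℤ → ℤ, CompleteFold η ∧ ∀ i : ℤ, V (i + 2) - V (i + 1) = rot (V (i + 1) - V i) (η i)

/-- Two bi-infinite curves are disjoint: no common unit edge, and at every common
lattice point the four incident traversed edges point in four distinct directions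
(the curves do not cross). -/
def CurvesDisjoint (V W : ℤ → ℤ × ℤ) : Prop :=
  (∀ i j : ℤ, s(V i, V (i + 1)) ≠ s(W j, W (j + 1))) ∧
  ∀ i j : ℤ, V i = W j →
    List.Pairwise (· ≠ ·) [V (i - 1) - V i, V (i + 1) - V i, W (j - 1) - W j, W (j + 1) - W j]


def Ei (x : ℕ → Bool) (j : ℕ) : ℤ := if x j then 1 else -1

def val2 (h : ℤ) : ℕ := h.natAbs.factorization 2

noncomputable def seqF (x : ℕ → Bool) (h : ℤ) : ℤ :=
  if h = 0 then 1 else Ei x (val2 h) * (if (h / 2 ^ val2 h) % 4 = 1 then 1 else -1)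

lemma Ei_pm (x : ℕ → Bool) (j : ℕ) : Ei x j = 1 ∨ Ei x j = -1 := by
  unfold Ei; split_ifs <;> simp

lemma val2_eval (N : ℕ) (m : ℤ) : val2 (2 ^ N * (2 * m + 1)) = N := by
  have hodd : Odd ((2 * m + 1 : ℤ).natAbs) := by
    rw [Int.natAbs_odd]; exact ⟨m, by ring⟩
  have hne : ((2 * m + 1 : ℤ).natAbs) ≠ 0 := by
    simp [Int.natAbs_ne_zero]; omega
  have h1 : ((2 : ℤ) ^ N * (2 * m + 1)).natAbs = 2 ^ N * (2 * m + 1).natAbs := by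
    simp [Int.natAbs_mul, Int.natAbs_pow]
  unfold val2
  rw [h1, Nat.factorization_mul (by positivity) hne]
  have h2 : ((2 : ℕ) ^ N).factorization 2 = N := by
    simp [Nat.factorization_pow, Nat.Prime.factorization Nat.prime_two]
  have h3 : ((2 * m + 1 : ℤ).natAbs).factorization 2 = 0 := by
    apply Nat.factorization_eq_zero_of_not_dvd
    rw [Nat.two_dvd_ne_zero, Nat.odd_iff.mp hodd]
  simp [h3, Nat.Prime.factorization Nat.prime_two]

lemma seq_eval (x : ℕ → Bool) (N : ℕ) (m : ℤ) :
    seqF x (2 ^ N * (2 * m + 1)) = Ei x N * (if Even m then 1 else -1) := by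
  have hne : (2 : ℤ) ^ N * (2 * m + 1) ≠ 0 := by
    apply mul_ne_zero (by positivity); omega
  unfold seqF
  rw [if_neg hne, val2_eval]
  have hq : (2 : ℤ) ^ N * (2 * m + 1) / 2 ^ N = 2 * m + 1 := by
    rw [Int.mul_ediv_cancel_left _ (by positivity)]
  rw [hq]
  congr 1
  have h4 : (2 * m + 1) % 4 = 1 ↔ Even m := by rw [Int.even_iff]; omega
  by_cases hm : Even m
  · rw [if_pos (h4.mpr hm), if_pos hm]
  · rw [if_neg (fun hc => hm (h4.mp hc)), if_neg hm]

lemma seq_pm_val (x : ℕ → Bool) (N : ℕ) (m : ℤ) :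
    seqF x (2 ^ N * (2 * m + 1)) = 1 ∨ seqF x (2 ^ N * (2 * m + 1)) = -1 := by
  rw [seq_eval]
  rcases Ei_pm x N with h | h <;> rw [h] <;> split_ifs <;> norm_num

lemma seq_complete (x : ℕ → Bool) : (∀ h : ℤ, seqF x h = 1 ∨ seqF x h = -1) ∧
    ∀ n : ℕ, ∃ hn : ℤ, ∀ k : ℤ,
      seqF x (hn + k * 2 ^ (n + 1)) = if Even k then seqF x hn else -seqF x hn := by
  constructor
  · intro h
    unfold seqF Ei
    split_ifs <;> norm_num
  · intro n
    refine ⟨2 ^ n, fun k => ?_⟩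
    have h1 : (2 : ℤ) ^ n + k * 2 ^ (n + 1) = 2 ^ n * (2 * k + 1) := by ring
    have h2 : (2 : ℤ) ^ n = 2 ^ n * (2 * 0 + 1) := by ring
    have e2 : seqF x (2 ^ n) = Ei x n := by
      rw [h2, seq_eval]; simp
    rw [h1, seq_eval, e2]
    by_cases hk : Even k
    · rw [if_pos hk, if_pos hk, mul_one]
    · rw [if_neg hk, if_neg hk]; ring

lemma rigidity (y : ℕ → Bool) (N : ℕ) (g : ℤ)
    (hA : seqF y (g + 2 ^ (N + 1)) = -seqF y g)
    (hB : seqF y (g + 2 ^ (N + 1) * 2) = -seqF y (g + 2 ^ (N + 1)))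
    (hC : seqF y (g + 2 ^ (N + 1) * 3) = -seqF y (g + 2 ^ (N + 1) * 2)) :
    ∃ m : ℤ, g = 2 ^ N * (2 * m + 1) := by
  by_cases hdvd : (2 : ℤ) ^ (N + 1) ∣ g
  · -- contradiction case: g = 2^(N+1) * u
    exfalso
    obtain ⟨u, hu⟩ := hdvd
    -- values at k: seqF y (2^(N+1) * (u + k))
    have key : ∀ w : ℤ, ∀ k : ℤ, u + k = 4 * w + 1 →
        seqF y (g + 2 ^ (N + 1) * k) = Ei y (N + 1) := by
      intro w k hw
      have : g + 2 ^ (N + 1) * k = 2 ^ (N + 1) * (2 * (2 * w) + 1) := by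
        have h2 : u = 4 * w + 1 - k := by omega
        rw [hu, h2]; ring
      rw [this, seq_eval, if_pos ⟨w, by ring⟩, mul_one]
    have key' : ∀ w : ℤ, ∀ k : ℤ, u + k = 4 * w + 3 →
        seqF y (g + 2 ^ (N + 1) * k) = -Ei y (N + 1) := by
      intro w k hw
      have : g + 2 ^ (N + 1) * k = 2 ^ (N + 1) * (2 * (2 * w + 1) + 1) := by
        have h2 : u = 4 * w + 3 - k := by omega
        rw [hu, h2]; ring
      rw [this, seq_eval, if_neg (by rw [Int.even_iff]; omega)]; ring
    have hg0 : g + 2 ^ (N + 1) * 0 = g := by ring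
    have hg1 : g + 2 ^ (N + 1) * 1 = g + 2 ^ (N + 1) := by ring
    have hE := Ei_pm y (N + 1)
    -- case on u % 4
    have h4 : u % 4 = 0 ∨ u % 4 = 1 ∨ u % 4 = 2 ∨ u % 4 = 3 := by omega
    rcases h4 with h | h | h | h
    · -- u ≡ 0 : k=1 gives E, k=3 gives -E ; T3 = T1
      have e1 := key (u / 4) 1 (by omega)
      have e3 := key' (u / 4) 3 (by omega)
      rw [hg1] at e1
      rcases hE with h' | h' <;> rw [h'] at e1 e3 <;> omega
    · -- u ≡ 1 : k=0 gives E, k=2 gives -E ; T2 = T0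
      have e0 := key ((u - 1) / 4) 0 (by omega)
      have e2 := key' ((u - 1) / 4) 2 (by omega)
      rw [hg0] at e0
      rcases hE with h' | h' <;> rw [h'] at e0 e2 <;> omega
    · -- u ≡ 2 : k=3 gives E, k=1 gives -E
      have e3 := key ((u + 2) / 4) 3 (by omega)
      have e1 := key' ((u - 3) / 4 + 1) 1 (by omega)
      rw [hg1] at e1
      rcases hE with h' | h' <;> rw [h'] at e1 e3 <;> omega
    · -- u ≡ 3 : k=2 gives E, k=0 gives -E
      have e2 := key ((u + 1) / 4) 2 (by omega)
      have e0 := key' ((u - 3) / 4) 0 (by omega)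
      rw [hg0] at e0
      rcases hE with h' | h' <;> rw [h'] at e0 e2 <;> omega
  · -- g = 2^j * odd with j ≤ N
    have hg0 : g ≠ 0 := by rintro rfl; exact hdvd ⟨0, by ring⟩
    obtain ⟨j, o, ho, hjo⟩ := Nat.exists_eq_pow_mul_and_not_dvd
      (Int.natAbs_ne_zero.mpr hg0) 2 (by norm_num)
    have hoodd : o % 2 = 1 := Nat.two_dvd_ne_zero.mp ho
    -- g = ± 2^j * o
    have h1 : (g.natAbs : ℤ) = 2 ^ j * o := by rw [hjo]; push_cast; ring
    have habs : g = 2 ^ j * (g.sign * o) := by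
      conv_lhs => rw [← Int.sign_mul_natAbs g]
      rw [h1]; ring
    have hosign : ∃ m : ℤ, (g.sign : ℤ) * o = 2 * m + 1 := by
      rcases Int.lt_or_lt_of_ne hg0 with h | h
      · rw [Int.sign_eq_neg_one_of_neg h]
        exact ⟨-(((o : ℤ) + 1) / 2), by omega⟩
      · rw [Int.sign_eq_one_of_pos h]
        exact ⟨((o : ℤ) - 1) / 2, by omega⟩
    obtain ⟨m, hm⟩ := hosign
    have hg : g = 2 ^ j * (2 * m + 1) := by rw [habs, hm]
    have hjN : j ≤ N := by
      by_contra hcon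
      apply hdvd
      refine ⟨2 ^ (j - (N + 1)) * (2 * m + 1), ?_⟩
      rw [hg, ← mul_assoc, ← pow_add]
      congr 2
      omega
    rcases eq_or_lt_of_le hjN with rfl | hjlt
    · exact ⟨m, hg⟩
    · -- j < N : contradiction with hA
      exfalso
      have hd : ∃ d : ℕ, N = j + d + 1 := ⟨N - j - 1, by omega⟩
      obtain ⟨d, rfl⟩ := hd
      have h1 : g + 2 ^ (j + d + 1 + 1) = 2 ^ j * (2 * (m + 2 ^ (d + 1)) + 1) := by
        rw [hg, pow_add, pow_add, pow_add]; ring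
      have h2 : Even (m + 2 ^ (d + 1)) ↔ Even m := by
        rw [Int.even_add]
        simp [Int.even_pow]
      rw [h1, hg, seq_eval, seq_eval] at hA
      have hE := Ei_pm y j
      by_cases hme : Even m
      · rw [if_pos (h2.mpr hme), if_pos hme] at hA
        rcases hE with h' | h' <;> rw [h'] at hA <;> omega
      · rw [if_neg (fun hc => hme (h2.mp hc)), if_neg hme] at hA
        rcases hE with h' | h' <;> rw [h'] at hA <;> omega

lemma subword_norm (c : ℤ → ℤ) (e : ℤ) (L : ℕ) :
    subwordAt c e L = (List.range L).map (fun i : ℕ => c (e + 1 + (i : ℤ))) := by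
  have key : ∀ l : List ℕ, List.map (fun i : ℤ => c (e + 1 + i)) (l.flatMap fun a => [(a : ℤ)])
      = l.map (fun i : ℕ => c (e + 1 + (i : ℤ))) := by
    intro l
    induction l with
    | nil => simp
    | cons x xs ih => simp_all
  simpa [subwordAt] using key (List.range L)

lemma subword_pointwise {a b : ℤ → ℤ} {h g : ℤ} {L : ℕ}
    (hE : subwordAt a h L = subwordAt b g L) (i : ℕ) (hi : i < L) :
    a (h + 1 + i) = b (g + 1 + i) := by
  rw [subword_norm, subword_norm] at hE
  have hil : i < ((List.range L).map (fun i : ℕ => a (h + 1 + (i : ℤ)))).length := by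
    simpa using hi
  have e := List.getElem_of_eq hE hil
  simpa using e

theorem statement15 :
    ∃ f : (ℕ → Bool) → (ℤ → ℤ),
      (∀ x, CompleteFold (f x)) ∧
      ∀ x y, (∀ T : List ℤ, IsSubword (f x) T ↔ IsSubword (f y) T) → x = y := by
  refine ⟨fun x => seqF x, fun x => seq_complete x, ?_⟩
  intro x y hsub
  funext n
  have hlen : ∀ (c : ℤ → ℤ) (e : ℤ) (L : ℕ), (subwordAt c e L).length = L := by
    intro c e L; rw [subword_norm]; simp
  set L : ℕ := 6 * 2 ^ (n + 2) + 1 with hLdef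
  have hsx : IsSubword (seqF x) (subwordAt (seqF x) (2 ^ (n + 2) - 1) L) :=
    ⟨2 ^ (n + 2) - 1, by rw [hlen]⟩
  obtain ⟨g, hg⟩ := (hsub _).mp hsx
  rw [hlen] at hg
  have hwin : ∀ i : ℕ, i < L → seqF x ((2 : ℤ) ^ (n + 2) + i) = seqF y (g + 1 + i) := by
    intro i hi
    have := subword_pointwise hg i hi
    rwa [show (2 : ℤ) ^ (n + 2) - 1 + 1 + i = 2 ^ (n + 2) + i by ring] at this
  have h2n : (2 : ℕ) ^ (n + 3) = 2 * 2 ^ (n + 2) := by rw [pow_succ]; ring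
  have hval : ∀ k : ℕ, k ≤ 3 →
      seqF y (g + 1 + 2 ^ (n + 3) * (k : ℤ)) = Ei x (n + 2) * (if Even k then 1 else -1) := by
    intro k hk
    have hi : 2 ^ (n + 3) * k < L := by
      have hmul : 2 ^ (n + 3) * k ≤ 2 ^ (n + 3) * 3 := Nat.mul_le_mul_left _ hk
      omega
    have hw := hwin (2 ^ (n + 3) * k) hi
    rw [show (2 : ℤ) ^ (n + 2) + ((2 ^ (n + 3) * k : ℕ) : ℤ)
        = 2 ^ (n + 2) * (2 * (k : ℤ) + 1) by push_cast; ring, seq_eval] at hw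
    simp only [Int.even_coe_nat] at hw
    rw [show g + 1 + ((2 ^ (n + 3) * k : ℕ) : ℤ) = g + 1 + 2 ^ (n + 3) * (k : ℤ) by
      push_cast; ring] at hw
    exact hw.symm
  have a0 := hval 0 (by norm_num)
  have a1 := hval 1 (by norm_num)
  have a2 := hval 2 (by norm_num)
  have a3 := hval 3 (by norm_num)
  rw [show g + 1 + 2 ^ (n + 3) * ((0 : ℕ) : ℤ) = g + 1 by push_cast; ring] at a0
  rw [show g + 1 + 2 ^ (n + 3) * ((1 : ℕ) : ℤ) = g + 1 + 2 ^ (n + 2 + 1) by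
    push_cast; ring] at a1
  rw [show g + 1 + 2 ^ (n + 3) * ((2 : ℕ) : ℤ) = g + 1 + 2 ^ (n + 2 + 1) * 2 by
    push_cast; ring] at a2
  rw [show g + 1 + 2 ^ (n + 3) * ((3 : ℕ) : ℤ) = g + 1 + 2 ^ (n + 2 + 1) * 3 by
    push_cast; ring] at a3
  norm_num [Nat.even_iff] at a0 a1 a2 a3
  have hA : seqF y (g + 1 + 2 ^ (n + 2 + 1)) = -seqF y (g + 1) := by rw [a1, a0]
  have hB : seqF y (g + 1 + 2 ^ (n + 2 + 1) * 2) = -seqF y (g + 1 + 2 ^ (n + 2 + 1)) := by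
    rw [a2, a1]; ring
  have hC : seqF y (g + 1 + 2 ^ (n + 2 + 1) * 3) = -seqF y (g + 1 + 2 ^ (n + 2 + 1) * 2) := by
    rw [a3, a2]
  obtain ⟨m, hm⟩ := rigidity y (n + 2) (g + 1) hA hB hC
  have h4n : (2 : ℕ) ^ (n + 2) = 4 * 2 ^ n := by rw [pow_succ, pow_succ]; ring
  have hi3 : 3 * 2 ^ n < L := by omega
  have F := hwin (3 * 2 ^ n) hi3
  rw [show (2 : ℤ) ^ (n + 2) + ((3 * 2 ^ n : ℕ) : ℤ) = 2 ^ n * (2 * 3 + 1) by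
    push_cast; ring] at F
  rw [show g + 1 + ((3 * 2 ^ n : ℕ) : ℤ) = 2 ^ n * (2 * (4 * m + 3) + 1) by
    rw [hm]; push_cast; ring] at F
  rw [seq_eval, seq_eval, if_neg (by rw [Int.even_iff]; omega),
    if_neg (by rw [Int.even_iff]; omega)] at F
  have hE : Ei x n = Ei y n := by linarith
  unfold Ei at hE
  by_cases hx : x n <;> by_cases hy : y n <;> simp_all
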